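/- arXiv:2411.07770 — 6 statements merged into one kernel-verified Lean document; each statement's English description precedes it below -/
import Mathlib

section
/- If s₊ ≥ 0, then Σ_{i∈I} log(1 + exp(s_i - s₊)) ≤ log(1 + exp(-s₊)) + Σ_{i∈I} log(1 + exp(s_i)). -/
theorem stmt_4 {ι : Type*} (I : Finset ι) (s : ι → ℝ) (spos : ℝ) (hpos : 0 ≤ spos) :
    ∑ i ∈ I, Real.log (1 + Real.exp (s i - spos)) ≤
      Real.log (1 + Real.exp (-spos)) + ∑ i ∈ I, Real.log (1 + Real.exp (s i)) := by
  have h1 : (0:ℝ) ≤ Real.log (1 + Real.exp (-spos)) := by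
    apply Real.log_nonneg
    have := Real.exp_pos (-spos)
    linarith
  have h2 : ∑ i ∈ I, Real.log (1 + Real.exp (s i - spos)) ≤
      ∑ i ∈ I, Real.log (1 + Real.exp (s i)) := by
    apply Finset.sum_le_sum
    intro i _
    apply Real.log_le_log (by positivity)
    have : Real.exp (s i - spos) ≤ Real.exp (s i) := Real.exp_le_exp.2 (by linarith)
    linarith
  linarith
end

section
/- Let r₊ = 1 + |{i ∈ I : s_i ≥ s₊}| be the rank of the positive item. Then -log(1/log₂(1+r₊)) ≤ log(1 + Σ_{i∈I} exp(s_i - s₊)); that is, -log NDCG(r₊) ≤ ℓ_CCE. -/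
theorem stmt_5 {ι : Type*} (I : Finset ι) (s : ι → ℝ) (spos : ℝ)
    (rpos : ℕ) (hr : rpos = 1 + (I.filter (fun i => spos ≤ s i)).card) :
    -Real.log (1 / Real.logb 2 (1 + (rpos : ℝ))) ≤
      Real.log (1 + ∑ i ∈ I, Real.exp (s i - spos)) := by
  have hr1 : 1 ≤ rpos := by omega
  have hpow : (1 + (rpos : ℝ)) ≤ 2 ^ rpos := by
    have := Nat.lt_two_pow_self (n := rpos)
    have : (1 + rpos : ℕ) ≤ 2 ^ rpos := by omega
    exact_mod_cast this
  have hlogb_pos : 0 < Real.logb 2 (1 + (rpos : ℝ)) := by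
    apply Real.logb_pos (by norm_num)
    have : (1:ℝ) ≤ rpos := by exact_mod_cast hr1
    linarith
  have hlogb_le : Real.logb 2 (1 + (rpos : ℝ)) ≤ (rpos : ℝ) := by
    rw [Real.logb_le_iff_le_rpow (by norm_num) (by positivity)]
    rwa [Real.rpow_natCast]
  have hsum : (rpos : ℝ) ≤ 1 + ∑ i ∈ I, Real.exp (s i - spos) := by
    have h1 : ((I.filter (fun i => spos ≤ s i)).card : ℝ)
        ≤ ∑ i ∈ I.filter (fun i => spos ≤ s i), Real.exp (s i - spos) := by
      calc ((I.filter (fun i => spos ≤ s i)).card : ℝ)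
          = ∑ _i ∈ I.filter (fun i => spos ≤ s i), (1:ℝ) := by simp
        _ ≤ _ := by
            apply Finset.sum_le_sum
            intro i hi
            rw [Finset.mem_filter] at hi
            calc (1:ℝ) = Real.exp 0 := by simp
              _ ≤ Real.exp (s i - spos) := Real.exp_le_exp.mpr (by linarith [hi.2])
    have h2 : ∑ i ∈ I.filter (fun i => spos ≤ s i), Real.exp (s i - spos)
        ≤ ∑ i ∈ I, Real.exp (s i - spos) :=
      Finset.sum_le_sum_of_subset_of_nonneg (Finset.filter_subset _ _)
        (fun i _ _ => (Real.exp_pos _).le)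
    rw [hr]
    push_cast
    linarith
  rw [Real.log_div (by norm_num) (ne_of_gt hlogb_pos), Real.log_one]
  simp only [zero_sub, neg_neg]
  apply Real.log_le_log hlogb_pos
  linarith
end

section
/- Let r₊ = 1 + |{i ∈ I : s_i ≥ s₊}| and suppose s₊ ≥ 0. Then -log(1/log₂(1+r₊)) ≤ log(1 + exp(-s₊)) + Σ_{i∈I} log(1 + exp(s_i)); that is, -log NDCG(r₊) ≤ ℓ_BCE. -/
theorem stmt_6 {ι : Type*} (I : Finset ι) (s : ι → ℝ) (spos : ℝ) (hpos : 0 ≤ spos)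
    (rpos : ℕ) (hr : rpos = 1 + (I.filter (fun i => spos ≤ s i)).card) :
    -Real.log (1 / Real.logb 2 (1 + (rpos : ℝ))) ≤
      Real.log (1 + Real.exp (-spos)) + ∑ i ∈ I, Real.log (1 + Real.exp (s i)) := by
  set k := (I.filter (fun i => spos ≤ s i)).card with hk
  subst hr
  have hlog2 : (0:ℝ) < Real.log 2 := Real.log_pos (by norm_num)
  -- rewrite LHS
  rw [one_div, Real.log_inv, neg_neg]
  have hx : (2:ℝ) ≤ 1 + ((1 + k : ℕ) : ℝ) := by push_cast; linarith [Nat.cast_nonneg (α := ℝ) k]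
  have hnat : (2 + k : ℕ) ≤ 2 ^ (2 ^ k) := by
    calc 2 + k ≤ 2 ^ (k + 1) := by
          have := Nat.lt_two_pow_self (n := k+1)
          omega
      _ ≤ 2 ^ (2 ^ k) := by
          apply Nat.pow_le_pow_right (by norm_num)
          have := Nat.lt_two_pow_self (n := k)
          omega
  have hxle : (1 : ℝ) + ((1 + k : ℕ) : ℝ) ≤ 2 ^ (2 ^ k) := by
    have h := Nat.cast_le (α := ℝ) |>.mpr hnat
    push_cast at h ⊢
    linarith
  -- logb bound
  have hlogb : Real.logb 2 (1 + ((1 + k : ℕ) : ℝ)) ≤ (2 ^ k : ℕ) := by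
    rw [Real.logb, div_le_iff₀ hlog2]
    calc Real.log (1 + ((1 + k : ℕ) : ℝ)) ≤ Real.log ((2:ℝ) ^ (2^k)) :=
          Real.log_le_log (by linarith) hxle
      _ = (2^k : ℕ) * Real.log 2 := by rw [Real.log_pow]
  have hlogbpos : (1:ℝ) ≤ Real.logb 2 (1 + ((1 + k : ℕ) : ℝ)) := by
    have h := Real.logb_le_logb_of_le (b := 2) one_lt_two (by norm_num : (0:ℝ) < 2) hx
    rwa [Real.logb_self_eq_one one_lt_two] at h
  have hLHS : Real.log (Real.logb 2 (1 + ((1 + k : ℕ) : ℝ))) ≤ k * Real.log 2 := by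
    calc Real.log (Real.logb 2 (1 + ((1 + k : ℕ) : ℝ))) ≤ Real.log ((2^k : ℕ)) :=
          Real.log_le_log (by linarith) (by exact_mod_cast hlogb)
      _ = k * Real.log 2 := by push_cast; rw [Real.log_pow]
  -- RHS bound
  have h1 : (0:ℝ) ≤ Real.log (1 + Real.exp (-spos)) :=
    Real.log_nonneg (by linarith [Real.exp_pos (-spos)])
  have hsum : (k : ℝ) * Real.log 2 ≤ ∑ i ∈ I, Real.log (1 + Real.exp (s i)) := by
    have h2 : ∑ i ∈ I.filter (fun i => spos ≤ s i), Real.log 2 ≤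
        ∑ i ∈ I.filter (fun i => spos ≤ s i), Real.log (1 + Real.exp (s i)) := by
      apply Finset.sum_le_sum
      intro i hi
      have hsi : spos ≤ s i := (Finset.mem_filter.mp hi).2
      apply Real.log_le_log (by norm_num)
      have : (1:ℝ) ≤ Real.exp (s i) := Real.one_le_exp (by linarith)
      linarith
    have h3 : ∑ i ∈ I.filter (fun i => spos ≤ s i), Real.log (1 + Real.exp (s i)) ≤
        ∑ i ∈ I, Real.log (1 + Real.exp (s i)) := by
      apply Finset.sum_le_sum_of_subset_of_nonneg (Finset.filter_subset _ _)
      intro i _ _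
      exact Real.log_nonneg (by linarith [Real.exp_pos (s i)])
    calc (k:ℝ) * Real.log 2 = ∑ i ∈ I.filter (fun i => spos ≤ s i), Real.log 2 := by
          rw [Finset.sum_const, nsmul_eq_mul, hk]
      _ ≤ _ := h2.trans h3
  linarith
end

section
/- Fix scores on a finite population I⁻ with s₊ ∈ ℝ, and let K be a uniformly random k-element subset of I⁻. Then P(-log NDCG(r₊) ≤ ℓ_BPR(K)) ≥ P(|Γ^K| ≥ log₂(log₂(1 + r₊))), where r₊ = 1 + |{i ∈ I⁻ : s_i ≥ s₊}|. -/
/-- Probability (over a uniformly random `k`-subset `K` of `Iminus`) that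
`-log NDCG(r₊) ≤ ℓ_BPR(K)` is at least the probability that
`|Γ^K| ≥ log₂(log₂(1 + r₊))`. -/
theorem stmt_11 {ι : Type*} [DecidableEq ι] (Iminus : Finset ι) (s : ι → ℝ) (spos : ℝ)
    (k : ℕ) (rpos : ℕ) (hr : rpos = 1 + (Iminus.filter (fun i => spos ≤ s i)).card) :
    ((((Iminus.powersetCard k).filter
        (fun K => Real.logb 2 (Real.logb 2 (1 + (rpos : ℝ))) ≤
          ((K.filter (fun i => spos ≤ s i)).card : ℝ))).card : ℝ) /
      (Iminus.card.choose k : ℝ)) ≤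
    ((((Iminus.powersetCard k).filter
        (fun K => -Real.log (1 / Real.logb 2 (1 + (rpos : ℝ))) ≤
          ∑ i ∈ K, Real.log (1 + Real.exp (s i - spos)))).card : ℝ) /
      (Iminus.card.choose k : ℝ)) := by
  rcases Nat.eq_zero_or_pos (Iminus.card.choose k) with h0 | hpos
  · simp [h0]
  · refine (div_le_div_iff_of_pos_right (by exact_mod_cast hpos)).mpr ?_
    refine Nat.cast_le.mpr (Finset.card_le_card ?_)
    intro K hK
    simp only [Finset.mem_filter, Finset.mem_powersetCard] at hK ⊢
    obtain ⟨hKmem, hcond⟩ := hK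
    refine ⟨hKmem, ?_⟩
    have h1 : -Real.log (1 / Real.logb 2 (1 + (rpos : ℝ)))
        = Real.log (Real.logb 2 (1 + (rpos : ℝ))) := by
      rw [one_div, Real.log_inv, neg_neg]
    rw [h1]
    set n := (K.filter (fun i => spos ≤ s i)).card with hn
    have hlog2 : 0 < Real.log 2 := Real.log_pos (by norm_num)
    have h2 : Real.log (Real.logb 2 (1 + (rpos : ℝ))) ≤ (n : ℝ) * Real.log 2 := by
      have := hcond
      rw [Real.logb, div_le_iff₀ hlog2] at this
      exact this
    have h3 : (n : ℝ) * Real.log 2 ≤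
        ∑ i ∈ K.filter (fun i => spos ≤ s i), Real.log (1 + Real.exp (s i - spos)) := by
      have hterm : ∀ i ∈ K.filter (fun i => spos ≤ s i),
          Real.log 2 ≤ Real.log (1 + Real.exp (s i - spos)) := by
        intro i hi
        simp only [Finset.mem_filter] at hi
        have he : (1:ℝ) ≤ Real.exp (s i - spos) := Real.one_le_exp (by linarith [hi.2])
        exact Real.log_le_log (by norm_num) (by linarith)
      calc (n:ℝ) * Real.log 2
          = ∑ _i ∈ K.filter (fun i => spos ≤ s i), Real.log 2 := by
            rw [Finset.sum_const, nsmul_eq_mul, hn]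
      _ ≤ _ := Finset.sum_le_sum hterm
    have h4 : ∑ i ∈ K.filter (fun i => spos ≤ s i), Real.log (1 + Real.exp (s i - spos)) ≤
        ∑ i ∈ K, Real.log (1 + Real.exp (s i - spos)) := by
      apply Finset.sum_le_sum_of_subset_of_nonneg (Finset.filter_subset _ _)
      intro i _ _
      have := Real.exp_pos (s i - spos)
      exact Real.log_nonneg (by linarith)
    linarith
end

section
/- Fix scores on a finite population I⁻ with s₊ ∈ ℝ, and let K be a uniformly random k-element subset of I⁻. Then P(-log NDCG(r₊) ≤ ℓ_CCE(K)) ≥ P(|Γ^K| ≥ log₂(1 + r₊)), where r₊ = 1 + |{i ∈ I⁻ : s_i ≥ s₊}|. -/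
/-- Probability (over a uniformly random `k`-subset `K` of `Iminus`) that
`-log NDCG(r₊) ≤ ℓ_CCE(K)` is at least the probability that
`|Γ^K| ≥ log₂(1 + r₊)`. -/
theorem stmt_12 {ι : Type*} [DecidableEq ι] (Iminus : Finset ι) (s : ι → ℝ) (spos : ℝ)
    (k : ℕ) (rpos : ℕ) (hr : rpos = 1 + (Iminus.filter (fun i => spos ≤ s i)).card) :
    ((((Iminus.powersetCard k).filter
        (fun K => Real.logb 2 (1 + (rpos : ℝ)) ≤
          ((K.filter (fun i => spos ≤ s i)).card : ℝ))).card : ℝ) /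
      (Iminus.card.choose k : ℝ)) ≤
    ((((Iminus.powersetCard k).filter
        (fun K => -Real.log (1 / Real.logb 2 (1 + (rpos : ℝ))) ≤
          Real.log (1 + ∑ i ∈ K, Real.exp (s i - spos)))).card : ℝ) /
      (Iminus.card.choose k : ℝ)) := by
  set L := Real.logb 2 (1 + (rpos : ℝ)) with hL
  have hrpos : 1 ≤ rpos := by omega
  have hL1 : (1 : ℝ) ≤ L := by
    rw [hL]
    calc (1 : ℝ) = Real.logb 2 2 := by simp
    _ ≤ Real.logb 2 (1 + rpos) := by
        have h1 : (1:ℝ) ≤ (rpos : ℝ) := by exact_mod_cast hrpos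
        gcongr
        · norm_num
        · linarith
  have hLpos : 0 < L := lt_of_lt_of_le one_pos hL1
  have hsub : (Iminus.powersetCard k).filter
        (fun K => L ≤ ((K.filter (fun i => spos ≤ s i)).card : ℝ)) ⊆
      (Iminus.powersetCard k).filter
        (fun K => -Real.log (1 / L) ≤
          Real.log (1 + ∑ i ∈ K, Real.exp (s i - spos))) := by
    apply Finset.monotone_filter_right
    intro K _ hK
    rw [one_div, Real.log_inv, neg_neg]
    apply Real.log_le_log hLpos
    have h1 : ((K.filter (fun i => spos ≤ s i)).card : ℝ) ≤
        ∑ i ∈ K, Real.exp (s i - spos) := by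
      calc ((K.filter (fun i => spos ≤ s i)).card : ℝ)
          = ∑ i ∈ K.filter (fun i => spos ≤ s i), (1 : ℝ) := by simp
        _ ≤ ∑ i ∈ K.filter (fun i => spos ≤ s i), Real.exp (s i - spos) := by
            apply Finset.sum_le_sum
            intro i hi
            have := (Finset.mem_filter.mp hi).2
            have : (0:ℝ) ≤ s i - spos := by linarith
            calc (1:ℝ) = Real.exp 0 := by simp
              _ ≤ Real.exp (s i - spos) := Real.exp_le_exp.mpr this
        _ ≤ ∑ i ∈ K, Real.exp (s i - spos) := by
            apply Finset.sum_le_sum_of_subset_of_nonneg (Finset.filter_subset _ _)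
            intro i _ _
            exact (Real.exp_pos _).le
    linarith
  have hcard := Finset.card_le_card hsub
  by_cases h0 : (Iminus.card.choose k : ℝ) = 0
  · simp [h0]
  · apply div_le_div_of_nonneg_right (by exact_mod_cast hcard) (Nat.cast_nonneg _)
end

section
/- Let r₊ = 1 + |{i ∈ I : s_i ≥ s₊}| with s₊ ≥ 0. Then -log(1/r₊) ≤ ℓ_BCE whenever |Γ₀| log 2 ≥ log r₊, where Γ₀ = {i ∈ I : s_i ≥ 0}; i.e., if 2^{|Γ₀|} ≥ r₊ then -log MRR(r₊) ≤ ℓ_BCE. -/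
theorem stmt_19 {ι : Type*} (I : Finset ι) (s : ι → ℝ) (spos : ℝ) (hpos : 0 ≤ spos)
    (rpos : ℕ) (hr : rpos = 1 + (I.filter (fun i => spos ≤ s i)).card)
    (hb : Real.log (rpos : ℝ) ≤ ((I.filter (fun i => (0 : ℝ) ≤ s i)).card : ℝ) * Real.log 2) :
    -Real.log (1 / (rpos : ℝ)) ≤
      Real.log (1 + Real.exp (-spos)) + ∑ i ∈ I, Real.log (1 + Real.exp (s i)) := by
  have hterm : ∀ i, 0 ≤ Real.log (1 + Real.exp (s i)) := by
    intro i
    apply Real.log_nonneg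
    linarith [Real.exp_pos (s i)]
  have hΓ : ((I.filter (fun i => (0 : ℝ) ≤ s i)).card : ℝ) * Real.log 2 ≤
      ∑ i ∈ I, Real.log (1 + Real.exp (s i)) := by
    calc ((I.filter (fun i => (0 : ℝ) ≤ s i)).card : ℝ) * Real.log 2
        = ∑ i ∈ I.filter (fun i => (0 : ℝ) ≤ s i), Real.log 2 := by
          rw [Finset.sum_const, nsmul_eq_mul]
      _ ≤ ∑ i ∈ I.filter (fun i => (0 : ℝ) ≤ s i), Real.log (1 + Real.exp (s i)) := by
          apply Finset.sum_le_sum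
          intro i hi
          have hsi : (0 : ℝ) ≤ s i := (Finset.mem_filter.mp hi).2
          apply Real.log_le_log (by norm_num)
          have := Real.one_le_exp hsi
          linarith
      _ ≤ ∑ i ∈ I, Real.log (1 + Real.exp (s i)) :=
          Finset.sum_le_sum_of_subset_of_nonneg (Finset.filter_subset _ _)
            (fun i _ _ => hterm i)
  have h0 : 0 ≤ Real.log (1 + Real.exp (-spos)) := by
    apply Real.log_nonneg; linarith [Real.exp_pos (-spos)]
  have hrp : (0:ℝ) < rpos := by
    have : 0 < rpos := by omega
    exact_mod_cast this
  rw [one_div, Real.log_inv, neg_neg]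
  linarith
end
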